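/- arXiv:2505.20359 — 2 statements merged into one kernel-verified Lean document; each statement's English description precedes it below -/
import Mathlib

section
/- Fix a finite nonempty action alphabet A and horizon T ∈ ℕ. A state is a list s of elements of A with length ≤ T, and a policy π assigns to each state s with length < T a probability mass function π(s) on A. Let Φ assign to each probability mass function μ on A and each function f : A → ℝ a real number Φ_μ(f), and assume Φ is monotone (f ≤ g pointwise implies Φ_μ(f) ≤ Φ_μ(g)) and translation invariant (Φ_μ(f + c) = Φ_μ(f) + c for every constant c ∈ ℝ). Given a terminal reward R on length-T lists, define the risk-aware value Ṽ_π(s) by Ṽ_π(s) = R(s) when |s| = T and Ṽ_π(s) = Φ_{π(s)}(a ↦ Ṽ_π(s ++ [a])) when |s| < T, and define the risk-aware advantage Ã_π(s, a) = Ṽ_π(s ++ [a]) − Ṽ_π(s). If π and π′ are two policies such that for every state s with |s| < T one has Φ_{π′(s)}(a ↦ Ã_π(s, a)) ≥ 0, then Ṽ_{π′}(s) ≥ Ṽ_π(s) for every state s; in particular Ṽ_{π′}([]) ≥ Ṽ_π([]), i.e., the risk-aware value of π′ at any initial prompt is at least that of π. -/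
/-- Risk-aware policy improvement: in the deterministic token-concatenation MDP, with a
monotone and translation-invariant risk functional `Φ`, if the risk-aggregated advantage of
`π` under the action distribution of `π'` is nonnegative at every nonterminal state, then the
risk-aware value of `π'` dominates that of `π` at every state, in particular at `[]`. -/
theorem stmt_1 {A : Type*} [Fintype A] [Nonempty A] (T : ℕ)
    (π π' : List A → A → ℝ)
    (hπ : ∀ s : List A, s.length < T → (∀ a, 0 ≤ π s a) ∧ (∑ a, π s a) = 1)
    (hπ' : ∀ s : List A, s.length < T → (∀ a, 0 ≤ π' s a) ∧ (∑ a, π' s a) = 1)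
    (Φ : (A → ℝ) → (A → ℝ) → ℝ)
    (hmono : ∀ (μ : A → ℝ) (f g : A → ℝ), (∀ a, f a ≤ g a) → Φ μ f ≤ Φ μ g)
    (htrans : ∀ (μ : A → ℝ) (f : A → ℝ) (c : ℝ), Φ μ (fun a => f a + c) = Φ μ f + c)
    (R : List A → ℝ) (V V' : List A → ℝ)
    (hVT : ∀ s : List A, s.length = T → V s = R s)
    (hV : ∀ s : List A, s.length < T → V s = Φ (π s) (fun a => V (s ++ [a])))
    (hV'T : ∀ s : List A, s.length = T → V' s = R s)
    (hV' : ∀ s : List A, s.length < T → V' s = Φ (π' s) (fun a => V' (s ++ [a])))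
    (hadv : ∀ s : List A, s.length < T →
      0 ≤ Φ (π' s) (fun a => V (s ++ [a]) - V s)) :
    (∀ s : List A, s.length ≤ T → V s ≤ V' s) ∧ V [] ≤ V' [] := by
  have key : ∀ n : ℕ, ∀ s : List A, s.length ≤ T → T - s.length ≤ n → V s ≤ V' s := by
    intro n
    induction n with
    | zero =>
      intro s hle h0
      have : s.length = T := by omega
      rw [hVT s this, hV'T s this]
    | succ n ih =>
      intro s hle hsn
      rcases eq_or_lt_of_le hle with heq | hlt
      · rw [hVT s heq, hV'T s heq]
      · have h1 : V s ≤ Φ (π' s) (fun a => V (s ++ [a])) := by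
          have := hadv s hlt
          have ht := htrans (π' s) (fun a => V (s ++ [a])) (-(V s))
          simp only [sub_eq_add_neg] at this ⊢
          linarith [this, ht]
        have h2 : Φ (π' s) (fun a => V (s ++ [a])) ≤ Φ (π' s) (fun a => V' (s ++ [a])) := by
          apply hmono
          intro a
          apply ih
          · simp only [List.length_append, List.length_singleton]; omega
          · simp only [List.length_append, List.length_singleton]; omega
        rw [hV' s hlt]
        linarith
  refine ⟨fun s hs => key (T - s.length) s hs le_rfl, ?_⟩
  exact key T [] (by simp) (by simp)
end

section
/- Let Z be a finite nonempty type, β > 0, c ∈ ℝ, and for i = 1, 2 let T_i ≥ 1, and for each t = 1, …, T_i let p_{i,t}, q_{i,t} : Z → ℝ be strictly positive functions, y_{i,t} ∈ Z, C_{i,t} > 0, and Φ_{i,t} : (Z → ℝ) → ℝ be translation invariant (Φ(f + c·𝟙) = Φ(f) + c) and positively homogeneous (Φ(c·f) = c·Φ(f) for c ≥ 0). Define Q̃_{i,t}(z) = β·log(p_{i,t}(z)/q_{i,t}(z)) + β·log C_{i,t}, Ã_{i,t} = Q̃_{i,t}(y_{i,t}) − Φ_{i,t}(Q̃_{i,t}),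 and suppose the sentence-level rewards satisfy r_i = c + Σ_{t=1}^{T_i} Ã_{i,t} with the constant c common to both. Then exp(r_1)/(exp(r_1) + exp(r_2)) = σ( u − δ ), where σ(u) = 1/(1 + exp(−u)), u = β·( Σ_{t=1}^{T_1} log(p_{1,t}(y_{1,t})/q_{1,t}(y_{1,t})) − Σ_{t=1}^{T_2} log(p_{2,t}(y_{2,t})/q_{2,t}(y_{2,t})) ), and δ = β·( Σ_{t=1}^{T_1} Φ_{1,t}( z ↦ log(p_{1,t}(z)/q_{1,t}(z)) ) − Σ_{t=1}^{T_2} Φ_{2,t}( z ↦ log(p_{2,t}(z)/q_{2,t}(z)) ) ). -/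

lemma sigma_aux (a b : ℝ) : Real.exp a / (Real.exp a + Real.exp b)
    = 1 / (1 + Real.exp (-(a - b))) := by
  rw [Real.exp_neg, Real.exp_sub]
  have ha := Real.exp_pos a
  have hb := Real.exp_pos b
  field_simp

/-- Theorem 1 of the paper: with token-level risk-aware advantages
`Ã_{i,t} = Q̃_{i,t}(y_{i,t}) − Φ_{i,t}(Q̃_{i,t})`, where
`Q̃_{i,t}(z) = β·log(p_{i,t}(z)/q_{i,t}(z)) + β·log C_{i,t}` and each `Φ_{i,t}` is
translation invariant and positively homogeneous, and sentence-level rewards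
`r_i = c + Σ_{t=1}^{T_i} Ã_{i,t}` with common constant `c`, the Bradley–Terry probability
`exp(r₁)/(exp(r₁)+exp(r₂))` equals `σ(u − δ)` with `u` the β-weighted difference of summed
log-likelihood ratios and `δ` the difference of sequential risk ratios. -/
theorem stmt_10 {Z : Type*} [Fintype Z] [Nonempty Z]
    (β : ℝ) (hβ : 0 < β) (c : ℝ)
    (T₁ T₂ : ℕ) (hT₁ : 1 ≤ T₁) (hT₂ : 1 ≤ T₂)
    (p₁ q₁ p₂ q₂ : ℕ → Z → ℝ)
    (hp₁ : ∀ t z, 0 < p₁ t z) (hq₁ : ∀ t z, 0 < q₁ t z)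
    (hp₂ : ∀ t z, 0 < p₂ t z) (hq₂ : ∀ t z, 0 < q₂ t z)
    (y₁ y₂ : ℕ → Z) (C₁ C₂ : ℕ → ℝ)
    (hC₁ : ∀ t, 0 < C₁ t) (hC₂ : ∀ t, 0 < C₂ t)
    (Φ₁ Φ₂ : ℕ → (Z → ℝ) → ℝ)
    (htrans₁ : ∀ t (f : Z → ℝ) (k : ℝ), Φ₁ t (fun z => f z + k) = Φ₁ t f + k)
    (hhom₁ : ∀ t (f : Z → ℝ) (k : ℝ), 0 ≤ k → Φ₁ t (fun z => k * f z) = k * Φ₁ t f)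
    (htrans₂ : ∀ t (f : Z → ℝ) (k : ℝ), Φ₂ t (fun z => f z + k) = Φ₂ t f + k)
    (hhom₂ : ∀ t (f : Z → ℝ) (k : ℝ), 0 ≤ k → Φ₂ t (fun z => k * f z) = k * Φ₂ t f)
    (r₁ r₂ : ℝ)
    (hr₁ : r₁ = c + ∑ t ∈ Finset.Icc 1 T₁,
      ((β * Real.log (p₁ t (y₁ t) / q₁ t (y₁ t)) + β * Real.log (C₁ t))
        - Φ₁ t (fun z => β * Real.log (p₁ t z / q₁ t z) + β * Real.log (C₁ t))))
    (hr₂ : r₂ = c + ∑ t ∈ Finset.Icc 1 T₂,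
      ((β * Real.log (p₂ t (y₂ t) / q₂ t (y₂ t)) + β * Real.log (C₂ t))
        - Φ₂ t (fun z => β * Real.log (p₂ t z / q₂ t z) + β * Real.log (C₂ t)))) :
    Real.exp r₁ / (Real.exp r₁ + Real.exp r₂)
      = 1 / (1 + Real.exp (-(
          (β * ((∑ t ∈ Finset.Icc 1 T₁, Real.log (p₁ t (y₁ t) / q₁ t (y₁ t)))
            - ∑ t ∈ Finset.Icc 1 T₂, Real.log (p₂ t (y₂ t) / q₂ t (y₂ t))))
          - (β * ((∑ t ∈ Finset.Icc 1 T₁, Φ₁ t (fun z => Real.log (p₁ t z / q₁ t z)))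
            - ∑ t ∈ Finset.Icc 1 T₂, Φ₂ t (fun z => Real.log (p₂ t z / q₂ t z))))))) := by

  have key : ∀ (Φ : (Z → ℝ) → ℝ)
      (htrans : ∀ (f : Z → ℝ) (k : ℝ), Φ (fun z => f z + k) = Φ f + k)
      (hhom : ∀ (f : Z → ℝ) (k : ℝ), 0 ≤ k → Φ (fun z => k * f z) = k * Φ f)
      (g : Z → ℝ) (k : ℝ),
      Φ (fun z => β * g z + k) = β * Φ g + k := by
    intro Φ htrans hhom g k
    rw [htrans (fun z => β * g z) k, hhom g β hβ.le]
  have hΦ₁ : ∀ t, Φ₁ t (fun z => β * Real.log (p₁ t z / q₁ t z) + β * Real.log (C₁ t))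
      = β * Φ₁ t (fun z => Real.log (p₁ t z / q₁ t z)) + β * Real.log (C₁ t) :=
    fun t => key (Φ₁ t) (htrans₁ t) (hhom₁ t) _ _
  have hΦ₂ : ∀ t, Φ₂ t (fun z => β * Real.log (p₂ t z / q₂ t z) + β * Real.log (C₂ t))
      = β * Φ₂ t (fun z => Real.log (p₂ t z / q₂ t z)) + β * Real.log (C₂ t) :=
    fun t => key (Φ₂ t) (htrans₂ t) (hhom₂ t) _ _
  rw [sigma_aux]
  have harg : r₁ - r₂ =
      (β * ((∑ t ∈ Finset.Icc 1 T₁, Real.log (p₁ t (y₁ t) / q₁ t (y₁ t)))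
            - ∑ t ∈ Finset.Icc 1 T₂, Real.log (p₂ t (y₂ t) / q₂ t (y₂ t))))
          - (β * ((∑ t ∈ Finset.Icc 1 T₁, Φ₁ t (fun z => Real.log (p₁ t z / q₁ t z)))
            - ∑ t ∈ Finset.Icc 1 T₂, Φ₂ t (fun z => Real.log (p₂ t z / q₂ t z)))) := by
    rw [hr₁, hr₂]
    have e₁ : ∀ t ∈ Finset.Icc 1 T₁,
        ((β * Real.log (p₁ t (y₁ t) / q₁ t (y₁ t)) + β * Real.log (C₁ t))
          - Φ₁ t (fun z => β * Real.log (p₁ t z / q₁ t z) + β * Real.log (C₁ t)))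
        = β * Real.log (p₁ t (y₁ t) / q₁ t (y₁ t))
          - β * Φ₁ t (fun z => Real.log (p₁ t z / q₁ t z)) := by
      intro t _; rw [hΦ₁ t]; ring
    have e₂ : ∀ t ∈ Finset.Icc 1 T₂,
        ((β * Real.log (p₂ t (y₂ t) / q₂ t (y₂ t)) + β * Real.log (C₂ t))
          - Φ₂ t (fun z => β * Real.log (p₂ t z / q₂ t z) + β * Real.log (C₂ t)))
        = β * Real.log (p₂ t (y₂ t) / q₂ t (y₂ t))
          - β * Φ₂ t (fun z => Real.log (p₂ t z / q₂ t z)) := by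
      intro t _; rw [hΦ₂ t]; ring
    rw [Finset.sum_congr rfl e₁, Finset.sum_congr rfl e₂,
      Finset.sum_sub_distrib, Finset.sum_sub_distrib,
      ← Finset.mul_sum, ← Finset.mul_sum, ← Finset.mul_sum, ← Finset.mul_sum]
    ring
  rw [← harg]
end
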